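/- For n ≥ 1 and scalars (α_σ)_{σ ∈ S_n} in ℚ, if ∑_{σ ∈ S_n} α_σ P_n(λ_{σ(1)},...,λ_{σ(n)}) = 0 for all positive integers λ_1,...,λ_n, then all α_σ = 0, where P_n(λ_1,...,λ_n) = ∏_{m=1}^{n-1} λ_m/(λ_m + ... + λ_n). -/

import Mathlib

/-- `Pfin μ = ∏_{m=1}^{n-1} μ_m / (μ_m + μ_{m+1} + ... + μ_n)` (0-indexed). -/
def Pfin {n : ℕ} (μ : Fin n → ℚ) : ℚ :=
  ∏ j ∈ Finset.univ.filter (fun j : Fin n => (j : ℕ) + 1 < n),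
    μ j / ∑ t ∈ Finset.univ.filter (fun t : Fin n => j ≤ t), μ t

namespace Stmt9Aux

variable {n : ℕ}

/-- Denominator in `Pfin`. -/
def D (μ : Fin n → ℚ) (j : Fin n) : ℚ :=
  ∑ t ∈ Finset.univ.filter (fun t : Fin n => j ≤ t), μ t

lemma D_pos {μ : Fin n → ℚ} (hμ : ∀ i, 0 < μ i) (j : Fin n) : 0 < D μ j :=
  Finset.sum_pos (fun t _ => hμ t) ⟨j, by simp⟩

lemma le_D {μ : Fin n → ℚ} (hμ : ∀ i, 0 < μ i) (j : Fin n) : μ j ≤ D μ j :=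
  Finset.single_le_sum (f := μ) (fun t _ => (hμ t).le) (by simp)

lemma factor_nonneg {μ : Fin n → ℚ} (hμ : ∀ i, 0 < μ i) (j : Fin n) :
    0 ≤ μ j / D μ j :=
  div_nonneg (hμ j).le (D_pos hμ j).le

lemma factor_le_one {μ : Fin n → ℚ} (hμ : ∀ i, 0 < μ i) (j : Fin n) :
    μ j / D μ j ≤ 1 :=
  div_le_one_of_le₀ (le_D hμ j) (D_pos hμ j).le

lemma Pfin_eq (μ : Fin n → ℚ) :
    Pfin μ = ∏ j ∈ Finset.univ.filter (fun j : Fin n => (j : ℕ) + 1 < n),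
      μ j / D μ j := rfl

lemma Pfin_nonneg {μ : Fin n → ℚ} (hμ : ∀ i, 0 < μ i) : 0 ≤ Pfin μ := by
  rw [Pfin_eq]
  exact Finset.prod_nonneg fun j _ => factor_nonneg hμ j

lemma Pfin_le_one {μ : Fin n → ℚ} (hμ : ∀ i, 0 < μ i) : Pfin μ ≤ 1 := by
  rw [Pfin_eq]
  exact Finset.prod_le_one (fun j _ => factor_nonneg hμ j) (fun j _ => factor_le_one hμ j)

/-- The special value `Pfin` at `μ i = B ^ (n - 1 - π i)`. -/
def Qp (π : Equiv.Perm (Fin n)) (B : ℕ) : ℚ :=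
  Pfin (fun i : Fin n => (B : ℚ) ^ (n - 1 - (π i : ℕ)))

lemma muB_pos {B : ℕ} (hB : 1 ≤ B) (π : Equiv.Perm (Fin n)) (i : Fin n) :
    0 < (B : ℚ) ^ (n - 1 - (π i : ℕ)) :=
  pow_pos (by exact_mod_cast hB) _

lemma Qp_nonneg {B : ℕ} (hB : 1 ≤ B) (π : Equiv.Perm (Fin n)) : 0 ≤ Qp π B :=
  Pfin_nonneg (muB_pos hB π)

/-- Upper bound for non-identity permutations. -/
lemma Qp_le {B : ℕ} (hB : 1 ≤ B) {π : Equiv.Perm (Fin n)} (hπ : π ≠ 1) :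
    Qp π B ≤ 1 / B := by
  have hB1 : (1 : ℚ) ≤ (B : ℚ) := by exact_mod_cast hB
  have hB0 : (0 : ℚ) < (B : ℚ) := lt_of_lt_of_le one_pos hB1
  set μ : Fin n → ℚ := fun i : Fin n => (B : ℚ) ^ (n - 1 - (π i : ℕ)) with hμdef
  have hμ : ∀ i, 0 < μ i := muB_pos hB π
  -- the set of non-fixed points
  set s : Finset (Fin n) := Finset.univ.filter (fun i => π i ≠ i) with hs
  have hsne : s.Nonempty := by
    by_contra hemp
    rw [Finset.not_nonempty_iff_eq_empty] at hemp
    apply hπ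
    have hall : ∀ i, π i = i := by
      intro i
      by_contra hi
      have : i ∈ s := by simp [hs, hi]
      simp [hemp] at this
    exact Equiv.ext hall
  set j : Fin n := s.min' hsne with hj
  have hjmem : j ∈ s := Finset.min'_mem s hsne
  have hjne : π j ≠ j := by simpa [hs] using hjmem
  have hmin : ∀ i, π i ≠ i → j ≤ i := by
    intro i hi
    exact Finset.min'_le s i (by simp [hs, hi])
  have hfix : ∀ i : Fin n, i < j → π i = i := by
    intro i hi
    by_contra hne
    exact absurd (hmin i hne) (not_le.mpr hi)
  -- π j > j
  have hjlt : j < π j := by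
    rcases lt_trichotomy (π j) j with hlt | heq | hgt
    · have := hfix (π j) hlt
      exact absurd (π.injective this) hjne
    · exact absurd heq hjne
    · exact hgt
  -- π⁻¹ j ≥ j
  have htge : j ≤ π⁻¹ j := by
    by_contra hlt
    push_neg at hlt
    have h1 := hfix (π⁻¹ j) hlt
    have h2 : π (π⁻¹ j) = j := π.apply_symm_apply j
    have h4 : π⁻¹ j = j := h1.symm.trans h2
    exact hjne (by rw [← h4, h2, h4])
  have hjS : (j : ℕ) + 1 < n := by
    have h1 : (j : ℕ) < (π j : ℕ) := hjlt
    have h2 : (π j : ℕ) < n := (π j).isLt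
    omega
  -- denominator at j is at least B^(n-1-j)
  have hterm : (B : ℚ) ^ (n - 1 - (j : ℕ)) ≤ D μ j := by
    have hmem : (π⁻¹ j) ∈ Finset.univ.filter (fun t : Fin n => j ≤ t) := by
      simpa using htge
    have := Finset.single_le_sum (f := μ) (fun t _ => (hμ t).le) hmem
    have heq : μ (π⁻¹ j) = (B : ℚ) ^ (n - 1 - (j : ℕ)) := by
      simp [hμdef, π.apply_symm_apply]
    rw [heq] at this
    exact this
  have hnum : μ j ≤ (B : ℚ) ^ (n - 2 - (j : ℕ)) := by
    apply pow_le_pow_right₀ hB1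
    have h1 : (j : ℕ) + 1 ≤ (π j : ℕ) := hjlt
    omega
  -- the factor at j is at most 1/B
  have hfj : μ j / D μ j ≤ 1 / B := by
    have h1 : μ j / D μ j ≤ μ j / (B : ℚ) ^ (n - 1 - (j : ℕ)) :=
      div_le_div_of_nonneg_left (hμ j).le (pow_pos hB0 _) hterm
    have h2 : (B : ℚ) ^ (n - 1 - (j : ℕ)) = (B : ℚ) ^ (n - 2 - (j : ℕ)) * B := by
      rw [← pow_succ]
      congr 1
      omega
    have h3 : μ j / (B : ℚ) ^ (n - 1 - (j : ℕ)) ≤ 1 / B := by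
      rw [h2, div_le_div_iff₀ (by positivity) hB0]
      calc μ j * B ≤ (B : ℚ) ^ (n - 2 - (j : ℕ)) * B := by
            exact mul_le_mul_of_nonneg_right hnum hB0.le
        _ = 1 * ((B : ℚ) ^ (n - 2 - (j : ℕ)) * B) := by ring
    linarith
  -- assemble
  rw [Qp, Pfin_eq]
  have hjmem2 : j ∈ Finset.univ.filter (fun j : Fin n => (j : ℕ) + 1 < n) := by
    simp [hjS]
  rw [← Finset.mul_prod_erase _ _ hjmem2]
  calc μ j / D μ j * ∏ i ∈ (Finset.univ.filter (fun j : Fin n => (j : ℕ) + 1 < n)).erase j,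
        μ i / D μ i
      ≤ μ j / D μ j * 1 := by
        refine mul_le_mul_of_nonneg_left ?_ (factor_nonneg hμ j)
        exact Finset.prod_le_one (fun i _ => factor_nonneg hμ i) (fun i _ => factor_le_one hμ i)
    _ = μ j / D μ j := mul_one _
    _ ≤ 1 / B := hfj

/-- Lower bound for the identity permutation. -/
lemma one_sub_le_Qp_one {B : ℕ} (hB : 1 ≤ B) (hBn : (n : ℚ) ≤ B) :
    1 - (n : ℚ) * n / B ≤ Qp (1 : Equiv.Perm (Fin n)) B := by
  have hB1 : (1 : ℚ) ≤ (B : ℚ) := by exact_mod_cast hB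
  have hB0 : (0 : ℚ) < (B : ℚ) := lt_of_lt_of_le one_pos hB1
  have hn0 : (0 : ℚ) ≤ (n : ℚ) := Nat.cast_nonneg n
  set μ : Fin n → ℚ := fun i : Fin n => (B : ℚ) ^ (n - 1 - (i : ℕ)) with hμdef
  have hμ : ∀ i, 0 < μ i := fun i => pow_pos hB0 _
  have hQ : Qp (1 : Equiv.Perm (Fin n)) B
      = ∏ j ∈ Finset.univ.filter (fun j : Fin n => (j : ℕ) + 1 < n), μ j / D μ j := rfl
  set S : Finset (Fin n) := Finset.univ.filter (fun j : Fin n => (j : ℕ) + 1 < n) with hS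
  have hdivle : (n : ℚ) / B ≤ 1 := (div_le_one hB0).mpr hBn
  have hdiv0 : (0 : ℚ) ≤ (n : ℚ) / B := div_nonneg hn0 hB0.le
  -- per-factor lower bound
  have hfac : ∀ j ∈ S, 1 - (n : ℚ) / B ≤ μ j / D μ j := by
    intro j hjS
    have hjlt : (j : ℕ) + 1 < n := by simpa [hS] using hjS
    set Bp2 : ℚ := (B : ℚ) ^ (n - 2 - (j : ℕ)) with hBp2
    have hBp2pos : 0 < Bp2 := pow_pos hB0 _
    have hsplit : μ j = (B : ℚ) * Bp2 := by
      show (B : ℚ) ^ (n - 1 - (j : ℕ)) = (B : ℚ) * (B : ℚ) ^ (n - 2 - (j : ℕ))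
      rw [← pow_succ']
      congr 1
      omega
    -- bound the denominator
    have hDle : D μ j ≤ μ j + (n : ℚ) * Bp2 := by
      have hjmem : j ∈ Finset.univ.filter (fun t : Fin n => j ≤ t) := by simp
      have hsplitD := Finset.add_sum_erase _ μ hjmem
      have htail : ∑ t ∈ (Finset.univ.filter (fun t : Fin n => j ≤ t)).erase j, μ t
          ≤ (n : ℚ) * Bp2 := by
        have hterm : ∀ t ∈ (Finset.univ.filter (fun t : Fin n => j ≤ t)).erase j,
            μ t ≤ Bp2 := by
          intro t ht
          have h1 : t ≠ j := (Finset.mem_erase.mp ht).1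
          have h2 : j ≤ t := by
            have := (Finset.mem_erase.mp ht).2
            simpa using this
          have h3 : (j : ℕ) + 1 ≤ (t : ℕ) := by
            have : j < t := lt_of_le_of_ne h2 (Ne.symm h1)
            exact this
          apply pow_le_pow_right₀ hB1
          omega
        calc ∑ t ∈ (Finset.univ.filter (fun t : Fin n => j ≤ t)).erase j, μ t
            ≤ ∑ _t ∈ (Finset.univ.filter (fun t : Fin n => j ≤ t)).erase j, Bp2 :=
              Finset.sum_le_sum hterm
          _ = ((Finset.univ.filter (fun t : Fin n => j ≤ t)).erase j).card * Bp2 := by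
              rw [Finset.sum_const, nsmul_eq_mul]
          _ ≤ (n : ℚ) * Bp2 := by
              apply mul_le_mul_of_nonneg_right _ hBp2pos.le
              have hcard : ((Finset.univ.filter (fun t : Fin n => j ≤ t)).erase j).card
                  ≤ n := by
                calc _ ≤ (Finset.univ : Finset (Fin n)).card :=
                      Finset.card_le_card (Finset.subset_univ _)
                  _ = n := by simp
              exact_mod_cast hcard
      rw [D, ← hsplitD]
      linarith
    -- conclude the per-factor bound
    rw [le_div_iff₀ (D_pos hμ j)]
    have hDge : μ j ≤ D μ j := le_D hμ j
    have hmulj : (n : ℚ) / B * μ j = (n : ℚ) * Bp2 := by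
      rw [hsplit]
      field_simp
    have haux : 0 ≤ (n : ℚ) / B * (D μ j - μ j) :=
      mul_nonneg hdiv0 (by linarith)
    nlinarith [hDle, hmulj, haux]
  -- product bound
  have hcardS : (S.card : ℚ) ≤ (n : ℚ) := by
    have : S.card ≤ n := by
      calc S.card ≤ (Finset.univ : Finset (Fin n)).card :=
            Finset.card_le_card (Finset.subset_univ _)
        _ = n := by simp
    exact_mod_cast this
  have hprod : (1 - (n : ℚ) / B) ^ S.card ≤ ∏ j ∈ S, μ j / D μ j := by
    have := Finset.prod_le_prod (s := S) (f := fun _ => 1 - (n : ℚ) / B)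
      (g := fun j => μ j / D μ j) (fun j _ => by linarith) hfac
    simpa using this
  have hbern : 1 - (S.card : ℚ) * ((n : ℚ) / B) ≤ (1 - (n : ℚ) / B) ^ S.card := by
    have h2 : (-2 : ℚ) ≤ -((n : ℚ) / B) := by linarith
    have := one_add_mul_le_pow h2 S.card
    calc 1 - (S.card : ℚ) * ((n : ℚ) / B) = 1 + (S.card : ℚ) * (-((n : ℚ) / B)) := by ring
      _ ≤ (1 + -((n : ℚ) / B)) ^ S.card := this
      _ = (1 - (n : ℚ) / B) ^ S.card := by ring_nf
  have hfin : 1 - (n : ℚ) * n / B ≤ 1 - (S.card : ℚ) * ((n : ℚ) / B) := by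
    have : (S.card : ℚ) * ((n : ℚ) / B) ≤ (n : ℚ) * ((n : ℚ) / B) :=
      mul_le_mul_of_nonneg_right hcardS hdiv0
    have heq : (n : ℚ) * ((n : ℚ) / B) = (n : ℚ) * n / B := by ring
    linarith [heq ▸ this]
  rw [hQ]
  linarith

end Stmt9Aux

theorem stmt9 (n : ℕ) (hn : 1 ≤ n) (α : Equiv.Perm (Fin n) → ℚ)
    (h : ∀ μ : Fin n → ℕ, (∀ i, 0 < μ i) →
      ∑ σ : Equiv.Perm (Fin n), α σ * Pfin (fun i => (μ (σ i) : ℚ)) = 0) :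
    ∀ σ : Equiv.Perm (Fin n), α σ = 0 := by
  intro τ
  by_contra hτ
  have hατ : 0 < |α τ| := abs_pos.mpr hτ
  set C : ℚ := ∑ σ : Equiv.Perm (Fin n), |α σ| with hC
  have hCpos : 0 < C :=
    Finset.sum_pos' (fun σ _ => abs_nonneg _) ⟨τ, Finset.mem_univ τ, hατ⟩
  obtain ⟨B, hBgt⟩ := exists_nat_gt (2 * (n : ℚ) * n + 2 * C / |α τ| + 1)
  have hq0 : (0 : ℚ) ≤ 2 * (n : ℚ) * n := by positivity
  have hq1 : (0 : ℚ) ≤ 2 * C / |α τ| := by positivity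
  have hB1q : (1 : ℚ) ≤ (B : ℚ) := by linarith
  have hB1 : 1 ≤ B := by exact_mod_cast hB1q
  have hB0 : (0 : ℚ) < (B : ℚ) := by linarith
  have hBn : (n : ℚ) ≤ (B : ℚ) := by nlinarith [sq_nonneg ((n : ℚ) - 1)]
  have hB2n2 : 2 * (n : ℚ) * n ≤ (B : ℚ) := by linarith
  -- plug in the special values
  set μ : Fin n → ℕ := fun i => B ^ (n - 1 - ((τ⁻¹ i : Fin n) : ℕ)) with hμdef
  have hμpos : ∀ i, 0 < μ i := fun i => pow_pos (by omega) _
  have hsum := h μ hμpos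
  have hsum2 : ∑ σ : Equiv.Perm (Fin n), α σ * Stmt9Aux.Qp (τ⁻¹ * σ) B = 0 := by
    rw [← hsum]
    apply Finset.sum_congr rfl
    intro σ _
    congr 1
    rw [Stmt9Aux.Qp]
    congr 1
    funext i
    simp [hμdef, Equiv.Perm.mul_apply, Nat.cast_pow]
  -- split the sum at τ
  have hsplit := Finset.add_sum_erase Finset.univ
    (fun σ : Equiv.Perm (Fin n) => α σ * Stmt9Aux.Qp (τ⁻¹ * σ) B) (Finset.mem_univ τ)
  have hττ : τ⁻¹ * τ = 1 := inv_mul_cancel τ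
  have hkey : α τ * Stmt9Aux.Qp (1 : Equiv.Perm (Fin n)) B
      = - ∑ σ ∈ Finset.univ.erase τ, α σ * Stmt9Aux.Qp (τ⁻¹ * σ) B := by
    rw [← hττ]
    linarith [hsplit.trans hsum2]
  -- bound the error sum
  have herr : |∑ σ ∈ Finset.univ.erase τ, α σ * Stmt9Aux.Qp (τ⁻¹ * σ) B| ≤ C / B := by
    calc |∑ σ ∈ Finset.univ.erase τ, α σ * Stmt9Aux.Qp (τ⁻¹ * σ) B|
        ≤ ∑ σ ∈ Finset.univ.erase τ, |α σ * Stmt9Aux.Qp (τ⁻¹ * σ) B| :=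
          Finset.abs_sum_le_sum_abs _ _
      _ ≤ ∑ σ ∈ Finset.univ.erase τ, |α σ| * (1 / B) := by
          apply Finset.sum_le_sum
          intro σ hσ
          have hσne : σ ≠ τ := Finset.ne_of_mem_erase hσ
          have hπne : τ⁻¹ * σ ≠ 1 := by
            intro hcon
            apply hσne
            have := congrArg (fun x => τ * x) hcon
            simpa [mul_assoc] using this
          rw [abs_mul, abs_of_nonneg (Stmt9Aux.Qp_nonneg hB1 _)]
          exact mul_le_mul_of_nonneg_left (Stmt9Aux.Qp_le hB1 hπne) (abs_nonneg _)
      _ = (∑ σ ∈ Finset.univ.erase τ, |α σ|) * (1 / B) := by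
          rw [Finset.sum_mul]
      _ ≤ C * (1 / B) := by
          apply mul_le_mul_of_nonneg_right _ (by positivity)
          exact Finset.sum_le_sum_of_subset_of_nonneg (Finset.subset_univ _)
            (fun σ _ _ => abs_nonneg _)
      _ = C / B := by ring
  -- the identity term is at least 1/2
  have hQ1 : (1 : ℚ) / 2 ≤ Stmt9Aux.Qp (1 : Equiv.Perm (Fin n)) B := by
    have hlow := Stmt9Aux.one_sub_le_Qp_one hB1 hBn
    have : (n : ℚ) * n / B ≤ 1 / 2 := by
      rw [div_le_div_iff₀ hB0 (by norm_num : (0:ℚ) < 2)]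
      linarith
    linarith
  have hQ1nn : 0 ≤ Stmt9Aux.Qp (1 : Equiv.Perm (Fin n)) B := Stmt9Aux.Qp_nonneg hB1 _
  -- combine
  have hcomb : |α τ| * (1 / 2) ≤ C / B := by
    calc |α τ| * (1 / 2) ≤ |α τ| * Stmt9Aux.Qp (1 : Equiv.Perm (Fin n)) B :=
          mul_le_mul_of_nonneg_left hQ1 (abs_nonneg _)
      _ = |α τ * Stmt9Aux.Qp (1 : Equiv.Perm (Fin n)) B| := by
          rw [abs_mul, abs_of_nonneg hQ1nn]
      _ = |∑ σ ∈ Finset.univ.erase τ, α σ * Stmt9Aux.Qp (τ⁻¹ * σ) B| := by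
          rw [hkey, abs_neg]
      _ ≤ C / B := herr
  -- contradiction: B > 2C/|ατ|
  have hfin : 2 * C / |α τ| < (B : ℚ) := by linarith
  rw [div_lt_iff₀ hατ] at hfin
  rw [le_div_iff₀ hB0] at hcomb
  nlinarith
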